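/- Let f : ℝ → ℝ be continuously differentiable with f′(0) ≠ 0, and let γ > 0. Consider the regularized gradient vector field of the Dirac-GAN with zero-centered gradient penalty, ṽ(θ, ψ) = (−f′(θψ)ψ, f′(θψ)θ − γψ). Then the Jacobian matrix of ṽ at the equilibrium (0, 0) equals [[0, −f′(0)], [f′(0), −γ]], its complex eigenvalues are λ_{1/2} = −γ/2 ± √(γ²/4 − f′(0)²), and both eigenvalues have strictly negative real part. -/

import Mathlib

open Matrix

/-- For the Dirac-GAN with zero-centered gradient penalty `R(ψ) = (γ/2)ψ²`, the Jacobian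
of the regularized gradient vector field `ṽ(θ,ψ) = (−f′(θψ)ψ, f′(θψ)θ − γψ)` at `(0,0)`
is `[[0, −f′(0)], [f′(0), −γ]]`; its complex eigenvalues are `−γ/2 ± √(γ²/4 − f′(0)²)`,
and both have strictly negative real part. -/
theorem dirac_gan_gradient_penalty_eigenvalues
    (f : ℝ → ℝ) (hf : ContDiff ℝ 1 f) (hf0 : deriv f 0 ≠ 0) (γ : ℝ) (hγ : 0 < γ)
    (v : (Fin 2 → ℝ) → (Fin 2 → ℝ))
    (hv : ∀ x : Fin 2 → ℝ,
      v x = ![-(deriv f (x 0 * x 1)) * x 1, deriv f (x 0 * x 1) * x 0 - γ * x 1]) :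
    HasFDerivAt v
      (LinearMap.toContinuousLinearMap
        (Matrix.toLin'
          (!![0, -(deriv f 0); deriv f 0, -γ] : Matrix (Fin 2) (Fin 2) ℝ)))
      0 ∧
    (∃ z : ℂ, z ^ 2 = (Complex.ofReal γ) ^ 2 / 4 - (Complex.ofReal (deriv f 0)) ^ 2 ∧
      spectrum ℂ
          ((!![0, -(deriv f 0); deriv f 0, -γ] : Matrix (Fin 2) (Fin 2) ℝ).map
            Complex.ofReal)
        = {-(Complex.ofReal γ) / 2 + z, -(Complex.ofReal γ) / 2 - z}) ∧
    (∀ lam ∈ spectrum ℂ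
        ((!![0, -(deriv f 0); deriv f 0, -γ] : Matrix (Fin 2) (Fin 2) ℝ).map
          Complex.ofReal),
      lam.re < 0) := by
  set a := deriv f 0 with ha
  -- spectrum characterization
  have key : ∀ lam : ℂ,
      lam ∈ spectrum ℂ ((!![0, -a; a, -γ] : Matrix (Fin 2) (Fin 2) ℝ).map Complex.ofReal)
        ↔ lam ^ 2 + γ * lam + a ^ 2 = 0 := by
    intro lam
    rw [spectrum.mem_iff]
    rw [show ¬IsUnit ((algebraMap ℂ (Matrix (Fin 2) (Fin 2) ℂ)) lam -
          (!![0, -a; a, -γ] : Matrix (Fin 2) (Fin 2) ℝ).map Complex.ofReal) ↔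
        ¬IsUnit ((algebraMap ℂ (Matrix (Fin 2) (Fin 2) ℂ)) lam -
          (!![0, -a; a, -γ] : Matrix (Fin 2) (Fin 2) ℝ).map Complex.ofReal).det from
      (Matrix.isUnit_iff_isUnit_det _).not]
    rw [isUnit_iff_ne_zero, not_not, Matrix.det_fin_two]
    simp [Matrix.algebraMap_matrix_apply]
    constructor <;> intro h <;> linear_combination h
  refine ⟨?_, ?_, ?_⟩
  · -- derivative
    have hg : Continuous (deriv f) := hf.continuous_deriv le_rfl
    rw [hasFDerivAt_iff_isLittleO_nhds_zero, Asymptotics.isLittleO_iff]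
    intro ε hε
    have h1 : Filter.Tendsto (fun h : Fin 2 → ℝ => h 0 * h 1) (nhds 0) (nhds 0) := by
      have := ((continuous_apply (0 : Fin 2)).mul (continuous_apply 1)).tendsto
        (0 : Fin 2 → ℝ)
      simpa [Pi.mul_def] using this
    have hcont : Filter.Tendsto (fun h : Fin 2 → ℝ => deriv f (h 0 * h 1)) (nhds 0)
        (nhds a) := (hg.tendsto 0).comp h1
    have hev : ∀ᶠ h : Fin 2 → ℝ in nhds 0, |deriv f (h 0 * h 1) - a| ≤ ε := by
      have := Metric.tendsto_nhds.mp hcont ε hε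
      filter_upwards [this] with h hh
      rw [Real.dist_eq] at hh
      exact hh.le
    filter_upwards [hev] with h hh
    rw [zero_add, hv, hv]
    have hle : ∀ i : Fin 2, |h i| ≤ ‖h‖ := fun i => norm_le_pi_norm h i
    rw [pi_norm_le_iff_of_nonneg (by positivity)]
    intro i
    set g := deriv f (h 0 * h 1) with hgdef
    fin_cases i
    · simp only [Matrix.toLin'_apply, LinearMap.coe_toContinuousLinearMap']
      simp [Matrix.mulVec, dotProduct, Fin.sum_univ_two]
      have e : -(g * h 1) + a * h 1 = -((g - a) * h 1) := by ring
      calc |(-(g * h 1) + a * h 1)| = |g - a| * |h 1| := by rw [e, abs_neg, abs_mul]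
        _ ≤ ε * ‖h‖ := mul_le_mul hh (hle 1) (abs_nonneg _) hε.le
    · simp only [Matrix.toLin'_apply, LinearMap.coe_toContinuousLinearMap']
      simp [Matrix.mulVec, dotProduct, Fin.sum_univ_two]
      have e : g * h 0 - γ * h 1 - (a * h 0 + -(γ * h 1)) = (g - a) * h 0 := by ring
      calc |g * h 0 - γ * h 1 - (a * h 0 + -(γ * h 1))| = |g - a| * |h 0| := by
            rw [e, abs_mul]
        _ ≤ ε * ‖h‖ := mul_le_mul hh (hle 0) (abs_nonneg _) hε.le
  · -- spectrum as a pair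
    obtain ⟨z, hz⟩ := IsAlgClosed.exists_pow_nat_eq
      ((Complex.ofReal γ) ^ 2 / 4 - (Complex.ofReal a) ^ 2) (n := 2) (by norm_num)
    refine ⟨z, hz, ?_⟩
    ext lam
    rw [key]
    have hfac : lam ^ 2 + γ * lam + a ^ 2
        = (lam - (-(Complex.ofReal γ) / 2 + z)) * (lam - (-(Complex.ofReal γ) / 2 - z)) := by
      linear_combination hz
    rw [hfac, mul_eq_zero, sub_eq_zero, sub_eq_zero]
    simp [Set.mem_insert_iff]
  · -- negative real parts
    intro lam hlam
    rw [key] at hlam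
    have ha2 : 0 < a ^ 2 := by positivity
    rw [Complex.ext_iff] at hlam
    obtain ⟨h1, h2⟩ := hlam
    simp only [Complex.add_re, Complex.add_im, Complex.mul_re, Complex.mul_im,
      Complex.ofReal_re, Complex.ofReal_im, Complex.zero_re, Complex.zero_im,
      pow_two] at h1 h2
    set x := lam.re
    set y := lam.im
    have h2' : y * (2 * x + γ) = 0 := by linear_combination h2
    rcases mul_eq_zero.mp h2' with hy | hx
    · rw [hy] at h1
      nlinarith [h1, ha2, hγ]
    · linarith
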